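/- Let M be a finite set, v : 2^M → ℝ≥0 a valuation with v(∅) = 0 that is monotone (v(S) ≤ v(T) whenever S ⊆ T), b ∈ (0,1], and let z satisfy 0 ≤ z ≤ APS(v, b). Then the symmetric concave-closure value of the truncated valuation v_{↓z} satisfies (v_{↓z})^+(b,…,b) = z. Moreover, for any feasible weight vector (α_S)_{S⊆M} (i.e., α_S ≥ 0, ∑_S α_S = 1, and ∑_{S : j ∈ S} α_S ≤ b for every j ∈ M) whose objective value ∑_S α_S · v_{↓z}(S) equals z, every S with α_S > 0 satisfies v_{↓z}(S) = z. -/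

import Mathlib

open Finset

/-- The AnyPrice Share of a valuation `v` on the goods `G` with entitlement `b`:
the infimum over price vectors `p ≥ 0` summing to `1` of the maximum value of a
bundle of total price at most `b`. -/
noncomputable def APS {G : Type*} [Fintype G] [DecidableEq G]
    (v : Finset G → ℝ) (b : ℝ) : ℝ :=
  sInf { x : ℝ | ∃ p : G → ℝ, (∀ j, 0 ≤ p j) ∧ (∑ j, p j) = 1 ∧
    x = sSup { y : ℝ | ∃ S : Finset G, (∑ j ∈ S, p j) ≤ b ∧ y = v S } }

/-- The symmetric concave-closure value `v⁺(b,…,b)`: the maximum over fractional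
allocations `α` of subsets (nonnegative weights summing to `1`, using each good with
total weight at most `b`) of the expected value `∑ S, α S * v S`. -/
noncomputable def concaveClosure {G : Type*} [Fintype G] [DecidableEq G]
    (v : Finset G → ℝ) (b : ℝ) : ℝ :=
  sSup { x : ℝ | ∃ α : Finset G → ℝ, (∀ S, 0 ≤ α S) ∧ (∑ S, α S) = 1 ∧
    (∀ j : G, ∑ S ∈ Finset.univ.filter (fun S : Finset G => j ∈ S), α S ≤ b) ∧
    x = ∑ S, α S * v S }

section Aux

variable {G : Type*} [Fintype G] [DecidableEq G]

/-- From `z ≤ APS v b`: for every price vector there is a bundle of price at most `b`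
and value at least `z`. -/
lemma aps_exists_set (v : Finset G → ℝ) (hempty : v ∅ = 0)
    (b : ℝ) (hb0 : 0 < b) (z : ℝ) (hz : z ≤ APS v b)
    (p : G → ℝ) (hp0 : ∀ j, 0 ≤ p j) (hp1 : ∑ j, p j = 1) :
    ∃ S : Finset G, (∑ j ∈ S, p j) ≤ b ∧ z ≤ v S := by
  classical
  set X := { x : ℝ | ∃ p : G → ℝ, (∀ j, 0 ≤ p j) ∧ (∑ j, p j) = 1 ∧
    x = sSup { y : ℝ | ∃ S : Finset G, (∑ j ∈ S, p j) ≤ b ∧ y = v S } } with hX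
  -- every element of X is nonnegative
  have hXlb : ∀ x ∈ X, (0:ℝ) ≤ x := by
    rintro x ⟨q, hq0, hq1, rfl⟩
    set Y := { y : ℝ | ∃ S : Finset G, (∑ j ∈ S, q j) ≤ b ∧ y = v S } with hY
    have hYfin : Y.Finite := by
      apply (Set.finite_range v).subset
      rintro y ⟨S, _, rfl⟩; exact ⟨S, rfl⟩
    have h0Y : (0:ℝ) ∈ Y := ⟨∅, by simp [hb0.le], by rw [hempty]⟩
    exact le_csSup hYfin.bddAbove h0Y
  set Y := { y : ℝ | ∃ S : Finset G, (∑ j ∈ S, p j) ≤ b ∧ y = v S } with hY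
  have hYfin : Y.Finite := by
    apply (Set.finite_range v).subset
    rintro y ⟨S, _, rfl⟩; exact ⟨S, rfl⟩
  have hYne : Y.Nonempty := ⟨v ∅, ∅, by simp [hb0.le], rfl⟩
  have hmem : sSup Y ∈ Y := hYne.csSup_mem hYfin
  obtain ⟨S, hSb, hSv⟩ := hmem
  refine ⟨S, hSb, ?_⟩
  have hXmem : sSup Y ∈ X := ⟨p, hp0, hp1, rfl⟩
  have : APS v b ≤ sSup Y := csInf_le ⟨0, hXlb⟩ hXmem
  linarith [hz, this, hSv.ge, hSv.le]

set_option maxHeartbeats 2000000 in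
/-- Existence of a feasible fractional allocation whose truncated value is exactly `z`. -/
lemma exists_alloc (v : Finset G → ℝ) (hnn : ∀ S, 0 ≤ v S) (hempty : v ∅ = 0)
    (b : ℝ) (hb0 : 0 < b) (hb1 : b ≤ 1)
    (z : ℝ) (hz0 : 0 ≤ z) (hz : z ≤ APS v b) :
    ∃ α : Finset G → ℝ, (∀ S, 0 ≤ α S) ∧ (∑ S, α S) = 1 ∧
      (∀ j : G, ∑ S ∈ Finset.univ.filter (fun S : Finset G => j ∈ S), α S ≤ b) ∧
      (∑ S, α S * min (v S) z) = z := by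
  classical
  rcases eq_or_lt_of_le hz0 with h0 | hzpos
  · -- z = 0 : put all weight on the empty set
    refine ⟨fun S => if S = (∅ : Finset G) then 1 else 0, ?_, ?_, ?_, ?_⟩
    · intro S; by_cases h : S = (∅ : Finset G) <;> simp [h]
    · simp
    · intro j
      have : ∀ S ∈ Finset.univ.filter (fun S : Finset G => j ∈ S),
          (if S = (∅ : Finset G) then (1:ℝ) else 0) = 0 := by
        intro S hS
        simp only [mem_filter] at hS
        have : S ≠ ∅ := by
          intro h; rw [h] at hS; exact absurd hS.2 (by simp)
        simp [this]
      rw [Finset.sum_congr rfl this]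
      simpa using hb0.le
    · rw [Finset.sum_eq_single (∅ : Finset G)]
      · simp [hempty, ← h0]
      · intro S _ hS; simp [hS]
      · simp
  -- main case z > 0
  cases isEmpty_or_nonempty G with
  | inl hGe =>
    exfalso
    have : APS v b = 0 := by
      have : { x : ℝ | ∃ p : G → ℝ, (∀ j, 0 ≤ p j) ∧ (∑ j, p j) = 1 ∧
          x = sSup { y : ℝ | ∃ S : Finset G, (∑ j ∈ S, p j) ≤ b ∧ y = v S } } = ∅ := by
        ext x; simp only [Set.mem_setOf_eq, Set.mem_empty_iff_false, iff_false]
        rintro ⟨p, _, hp1, _⟩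
        rw [Finset.sum_of_isEmpty] at hp1 <;> norm_num at hp1
      rw [APS, this, Real.sInf_empty]
    linarith
  | inr hGne =>
  by_contra hcon
  set w : Finset G → ℝ := fun S => min (v S) z with hw
  have hwz : ∀ S, w S ≤ z := fun S => min_le_right _ _
  -- the two linear maps
  set T1 : (Finset G → ℝ) →ₗ[ℝ] (G → ℝ) :=
    { toFun := fun α => fun j => ∑ S, α S * ((if j ∈ S then (1:ℝ) else 0) - b)
      map_add' := by intro α β; funext j; simp [add_mul, Finset.sum_add_distrib]
      map_smul' := by
        intro c α; funext j
        simp [Finset.mul_sum, mul_assoc] } with hT1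
  set T2 : (Finset G → ℝ) →ₗ[ℝ] ℝ :=
    { toFun := fun α => ∑ S, α S * (w S - z)
      map_add' := by intro α β; simp [add_mul, Finset.sum_add_distrib]
      map_smul' := by intro c α; simp [Finset.mul_sum, mul_assoc] } with hT2
  set T : (Finset G → ℝ) →ₗ[ℝ] ((G → ℝ) × ℝ) := LinearMap.prod T1 T2 with hT
  set K : Set ((G → ℝ) × ℝ) := T '' (stdSimplex ℝ (Finset G)) with hK
  set D : Set ((G → ℝ) × ℝ) := {x | (∀ j, x.1 j ≤ 0) ∧ 0 ≤ x.2} with hD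
  have hKc : IsCompact K := (isCompact_stdSimplex ℝ (Finset G)).image T.continuous_of_finiteDimensional
  have hKconv : Convex ℝ K := (convex_stdSimplex ℝ _).linear_image T
  have hDconv : Convex ℝ D := by
    rintro x ⟨hx1, hx2⟩ y ⟨hy1, hy2⟩ a c ha hc hac
    constructor
    · intro j
      have h1 : a * x.1 j ≤ 0 := mul_nonpos_iff.mpr (Or.inl ⟨ha, hx1 j⟩)
      have h2 : c * y.1 j ≤ 0 := mul_nonpos_iff.mpr (Or.inl ⟨hc, hy1 j⟩)
      have : (a • x + c • y).1 j = a * x.1 j + c * y.1 j := rfl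
      rw [this]; linarith
    · have : (a • x + c • y).2 = a * x.2 + c * y.2 := rfl
      rw [this]
      have h1 : 0 ≤ a * x.2 := mul_nonneg ha hx2
      have h2 : 0 ≤ c * y.2 := mul_nonneg hc hy2
      linarith
  have hDclosed : IsClosed D := by
    have : D = (⋂ j, {x : (G → ℝ) × ℝ | x.1 j ≤ 0}) ∩ {x : (G → ℝ) × ℝ | 0 ≤ x.2} := by
      ext x; simp [hD, Set.mem_iInter]
    rw [this]
    exact IsClosed.inter
      (isClosed_iInter fun j =>
        isClosed_le ((continuous_apply j).comp continuous_fst) continuous_const)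
      (isClosed_le continuous_const continuous_snd)
  -- disjointness from the assumed nonexistence
  have hdisj : Disjoint K D := by
    rw [Set.disjoint_left]
    rintro x ⟨α, ⟨hαnn, hαsum⟩, rfl⟩ ⟨hx1, hx2⟩
    apply hcon
    refine ⟨α, hαnn, hαsum, ?_, ?_⟩
    · intro j
      have h := hx1 j
      have hcomp : (T α).1 j
          = (∑ S ∈ Finset.univ.filter (fun S : Finset G => j ∈ S), α S) - b := by
        show (∑ S, α S * ((if j ∈ S then (1:ℝ) else 0) - b))
          = (∑ S ∈ Finset.univ.filter (fun S : Finset G => j ∈ S), α S) - b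
        rw [Finset.sum_filter]
        have : ∀ S : Finset G, α S * ((if j ∈ S then (1:ℝ) else 0) - b)
            = (if j ∈ S then α S else 0) - α S * b := by
          intro S; split <;> ring
        rw [Finset.sum_congr rfl (fun S _ => this S), Finset.sum_sub_distrib,
          ← Finset.sum_mul, hαsum, one_mul]
      rw [hcomp] at h; linarith
    · have hcomp : (T α).2 = (∑ S, α S * w S) - z := by
        show (∑ S, α S * (w S - z)) = (∑ S, α S * w S) - z
        have : ∀ S : Finset G, α S * (w S - z) = α S * w S - α S * z := fun S => by ring
        rw [Finset.sum_congr rfl (fun S _ => this S), Finset.sum_sub_distrib,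
          ← Finset.sum_mul, hαsum, one_mul]
      have h2 := hx2
      rw [hcomp] at h2
      have hub : (∑ S, α S * w S) ≤ z := by
        calc (∑ S, α S * w S) ≤ ∑ S, α S * z :=
              Finset.sum_le_sum fun S _ => mul_le_mul_of_nonneg_left (hwz S) (hαnn S)
        _ = z := by rw [← Finset.sum_mul, hαsum, one_mul]
      have : (∑ S, α S * w S) = z := le_antisymm hub (by linarith)
      exact this
  -- separation
  obtain ⟨f, c1, c2, hfK, hc12, hfD⟩ :=
    geometric_hahn_banach_compact_closed hKconv hKc hDconv hDclosed hdisj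
  have h0D : ((0 : G → ℝ), (0:ℝ)) ∈ D := ⟨fun j => le_refl 0, le_refl 0⟩
  have hc2neg : c2 < 0 := by
    have := hfD _ h0D
    have h0 : f ((0 : G → ℝ), (0:ℝ)) = 0 := by
      have : ((0 : G → ℝ), (0:ℝ)) = (0 : (G → ℝ) × ℝ) := rfl
      rw [this, map_zero]
    linarith [this, h0.symm.le, h0.le]
  set μ : ℝ := f ((0 : G → ℝ), 1) with hμdef
  set q : G → ℝ := fun j => f ((Pi.single j 1 : G → ℝ), 0) with hqdef
  have hμ : 0 ≤ μ := by
    by_contra hneg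
    push_neg at hneg
    set s : ℝ := (c2 - 1) / μ with hs
    have hs0 : 0 ≤ s := div_nonneg_iff.mpr (Or.inr ⟨by linarith, hneg.le⟩)
    have hmem : ((0 : G → ℝ), s) ∈ D := ⟨fun j => le_refl 0, hs0⟩
    have hcalc : f ((0 : G → ℝ), s) = s * μ := by
      have : s • ((0 : G → ℝ), (1:ℝ)) = ((0 : G → ℝ), s) := by
        rw [Prod.smul_mk]; simp
      rw [← this, map_smul, smul_eq_mul]
    have := hfD _ hmem
    rw [hcalc, hs, div_mul_cancel₀ _ (ne_of_lt hneg)] at this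
    linarith
  have hq : ∀ j, q j ≤ 0 := by
    intro j
    by_contra hpos
    push_neg at hpos
    set s : ℝ := (1 - c2) / q j with hs
    have hs0 : 0 ≤ s := div_nonneg (by linarith) hpos.le
    set e : G → ℝ := Pi.single j 1 with he
    have hmem : ((-s) • e, (0:ℝ)) ∈ D := by
      refine ⟨fun i => ?_, le_refl 0⟩
      show -s * e i ≤ 0
      rcases eq_or_ne i j with h | h
      · subst h; simp [he, Pi.single_apply]; linarith
      · simp [he, Pi.single_apply, h]
    have hcalc : f ((-s) • e, (0:ℝ)) = (-s) * q j := by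
      have h1 : (-s) • (e, (0:ℝ)) = ((-s) • e, (0:ℝ)) := by
        rw [Prod.smul_mk]; simp
      rw [← h1, map_smul, smul_eq_mul, hqdef]
    have := hfD _ hmem
    rw [hcalc, hs] at this
    rw [neg_mul, div_mul_cancel₀ _ (ne_of_gt hpos)] at this
    linarith
  -- f is given by the coefficients q and μ
  have hflin : ∀ (c : G → ℝ) (t : ℝ), f (c, t) = (∑ j, c j * q j) + t * μ := by
    intro c t
    have hdecomp : (c, t) = (∑ j, (c j) • (((Pi.single j 1 : G → ℝ)), (0:ℝ)))
        + t • ((0 : G → ℝ), (1:ℝ)) := by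
      apply Prod.ext
      · rw [Prod.fst_add, Prod.fst_sum]
        have : ∀ j : G, ((c j) • (((Pi.single j 1 : G → ℝ)), (0:ℝ))).1
            = Pi.single j (c j) := by
          intro j
          show (c j) • (Pi.single j 1 : G → ℝ) = Pi.single j (c j)
          funext i
          rcases eq_or_ne i j with h | h
          · subst h; simp [Pi.single_apply]
          · simp [Pi.single_apply, h]
        rw [Finset.sum_congr rfl (fun j _ => this j), Finset.univ_sum_single]
        simp
      · rw [Prod.snd_add, Prod.snd_sum]
        simp
    rw [hdecomp, map_add, map_sum]
    simp only [map_smul, smul_eq_mul]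
    rfl
  -- the key strict inequality for each set S
  set Q : ℝ := ∑ j, q j with hQdef
  have hQ0 : Q ≤ 0 := Finset.sum_nonpos fun j _ => hq j
  have hkey : ∀ S : Finset G, (∑ j ∈ S, q j) - b * Q + (w S - z) * μ < 0 := by
    intro S
    -- u S ∈ K via the vertex Pi.single S 1 of the simplex
    have hmemK : T (Pi.single S 1) ∈ K :=
      ⟨Pi.single S 1, single_mem_stdSimplex ℝ S, rfl⟩
    have hval := hfK _ hmemK
    have hTS : T (Pi.single S 1)
        = ((fun j => (if j ∈ S then (1:ℝ) else 0) - b), w S - z) := by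
      apply Prod.ext
      · show (fun j => ∑ S', (Pi.single S 1 : Finset G → ℝ) S'
            * ((if j ∈ S' then (1:ℝ) else 0) - b))
          = fun j => (if j ∈ S then (1:ℝ) else 0) - b
        funext j
        rw [Finset.sum_eq_single S]
        · simp
        · intro S' _ hS'; simp [Pi.single_apply, hS']
        · simp
      · show (∑ S', (Pi.single S 1 : Finset G → ℝ) S' * (w S' - z)) = w S - z
        rw [Finset.sum_eq_single S]
        · simp
        · intro S' _ hS'; simp [Pi.single_apply, hS']
        · simp
    rw [hTS, hflin] at hval
    have hsum : (∑ j, ((if j ∈ S then (1:ℝ) else 0) - b) * q j)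
        = (∑ j ∈ S, q j) - b * Q := by
      have : ∀ j : G, ((if j ∈ S then (1:ℝ) else 0) - b) * q j
          = (if j ∈ S then q j else 0) - b * q j := by
        intro j; split <;> ring
      rw [Finset.sum_congr rfl (fun j _ => this j), Finset.sum_sub_distrib,
        ← Finset.mul_sum, Finset.sum_ite_mem, Finset.univ_inter]
    rw [hsum] at hval
    linarith
  -- from S = ∅ we get μ > 0
  have hμpos : 0 < μ := by
    rcases eq_or_lt_of_le hμ with h' | h'
    · exfalso
      have h := hkey ∅
      have hw0 : w ∅ = 0 := by simp [hw, hempty, hz0]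
      rw [Finset.sum_empty, hw0, ← h'] at h
      have hz00 : (0 - z) * 0 = 0 := by ring
      rw [hz00] at h
      have hbQ : b * Q ≤ 0 := mul_nonpos_iff.mpr (Or.inl ⟨hb0.le, hQ0⟩)
      linarith
    · exact h'
  -- case on Q
  rcases eq_or_lt_of_le hQ0 with hQeq | hQneg
  · -- Q = 0, hence q = 0; use uniform prices
    have hqzero : ∀ j, q j = 0 := by
      intro j
      have := Finset.sum_eq_zero_iff_of_nonneg
        (fun i (_ : i ∈ Finset.univ) => neg_nonneg.mpr (hq i))
      have hsum0 : (∑ i, -q i) = 0 := by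
        rw [Finset.sum_neg_distrib, ← hQdef, hQeq, neg_zero]
      have := this.mp hsum0 j (Finset.mem_univ j)
      linarith
    set p : G → ℝ := fun _ => (Fintype.card G : ℝ)⁻¹ with hp
    have hcard : (0:ℝ) < (Fintype.card G : ℝ) := by
      have : 0 < Fintype.card G := Fintype.card_pos
      exact_mod_cast this
    obtain ⟨S, _, hvS⟩ := aps_exists_set v hempty b hb0 z hz p
      (fun _ => inv_nonneg.mpr hcard.le)
      (by rw [hp, Finset.sum_const, card_univ, nsmul_eq_mul, mul_inv_cancel₀ (ne_of_gt hcard)])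
    have hwS : w S = z := min_eq_right hvS
    have h := hkey S
    have : (∑ j ∈ S, q j) = 0 := Finset.sum_eq_zero fun j _ => hqzero j
    rw [this, hQeq, hwS] at h
    simp at h
  · -- Q < 0; use the prices q j / Q
    set p : G → ℝ := fun j => q j / Q with hp
    have hp1 : (∑ j, p j) = 1 := by
      rw [hp, ← Finset.sum_div, ← hQdef, div_self (ne_of_lt hQneg)]
    have hpnn : ∀ j, 0 ≤ p j := fun j => div_nonneg_iff.mpr (Or.inr ⟨hq j, hQneg.le⟩)
    obtain ⟨S, hSb, hvS⟩ := aps_exists_set v hempty b hb0 z hz p hpnn hp1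
    have hwS : w S = z := min_eq_right hvS
    have hSq : b * Q ≤ (∑ j ∈ S, q j) := by
      have : (∑ j ∈ S, p j) = (∑ j ∈ S, q j) / Q := by rw [hp, Finset.sum_div]
      rw [this] at hSb
      exact (div_le_iff_of_neg hQneg).mp hSb
    have h := hkey S
    rw [hwS] at h
    simp at h
    linarith

end Aux

/-- For `z ≤ APS(v,b)`, the symmetric concave-closure value of the truncation of
`v` at `z` equals `z`; moreover any feasible weight vector achieving objective `z`
puts positive weight only on sets of truncated value exactly `z`. -/
theorem concaveClosure_truncation_eq {G : Type*} [Fintype G] [DecidableEq G]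
    (v : Finset G → ℝ) (hnn : ∀ S, 0 ≤ v S) (hempty : v ∅ = 0)
    (hmono : ∀ S T : Finset G, S ⊆ T → v S ≤ v T)
    (b : ℝ) (hb0 : 0 < b) (hb1 : b ≤ 1)
    (z : ℝ) (hz0 : 0 ≤ z) (hz : z ≤ APS v b) :
    concaveClosure (fun S => min (v S) z) b = z ∧
    ∀ α : Finset G → ℝ, (∀ S, 0 ≤ α S) → (∑ S, α S) = 1 →
      (∀ j : G, ∑ S ∈ Finset.univ.filter (fun S : Finset G => j ∈ S), α S ≤ b) →
      (∑ S, α S * min (v S) z) = z →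
      ∀ S : Finset G, 0 < α S → min (v S) z = z := by
  classical
  obtain ⟨α₀, hα₀nn, hα₀sum, hα₀feas, hα₀obj⟩ :=
    exists_alloc v hnn hempty b hb0 hb1 z hz0 hz
  have hub : ∀ x ∈ { x : ℝ | ∃ α : Finset G → ℝ, (∀ S, 0 ≤ α S) ∧ (∑ S, α S) = 1 ∧
      (∀ j : G, ∑ S ∈ Finset.univ.filter (fun S : Finset G => j ∈ S), α S ≤ b) ∧
      x = ∑ S, α S * min (v S) z }, x ≤ z := by
    rintro x ⟨α, hαnn, hαsum, _, rfl⟩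
    calc (∑ S, α S * min (v S) z) ≤ ∑ S, α S * z :=
          Finset.sum_le_sum fun S _ =>
            mul_le_mul_of_nonneg_left (min_le_right _ _) (hαnn S)
    _ = z := by rw [← Finset.sum_mul, hαsum, one_mul]
  constructor
  · apply le_antisymm
    · exact Real.sSup_le hub hz0
    · exact le_csSup ⟨z, hub⟩ ⟨α₀, hα₀nn, hα₀sum, hα₀feas, hα₀obj.symm⟩
  · intro α hαnn hαsum hαfeas hαobj S hS
    have hterm : ∀ T : Finset G, T ∈ Finset.univ →
        (0:ℝ) ≤ α T * (z - min (v T) z) :=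
      fun T _ => mul_nonneg (hαnn T) (sub_nonneg.mpr (min_le_right _ _))
    have hsum0 : (∑ T, α T * (z - min (v T) z)) = 0 := by
      have : ∀ T : Finset G, α T * (z - min (v T) z)
          = α T * z - α T * min (v T) z := fun T => by ring
      rw [Finset.sum_congr rfl (fun T _ => this T), Finset.sum_sub_distrib,
        ← Finset.sum_mul, hαsum, one_mul, hαobj, sub_self]
    have := (Finset.sum_eq_zero_iff_of_nonneg hterm).mp hsum0 S (Finset.mem_univ S)
    rcases mul_eq_zero.mp this with h | h
    · exact absurd h (ne_of_gt hS)
    · have : min (v S) z = z := by linarith [sub_eq_zero.mp h]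
      exact this
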